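/- Let k be an algebraically closed field and d ≥ 1 an integer with char(k) ∤ 2d. Then for every β ∈ k, the polynomial φ_d(X) − β ∈ k[X] has at least d/2 distinct roots in k, i.e., twice the number of its distinct roots is at least d. -/

import Mathlib

open Polynomial

lemma dickson_monic_natDegree (R : Type*) [CommRing R] [Nontrivial R] :
    ∀ n : ℕ, (dickson 1 (1 : R) (n + 1)).Monic ∧
      (dickson 1 (1 : R) (n + 1)).natDegree = n + 1
  | 0 => by simp [dickson_one, monic_X]
  | 1 => by
    have h2 : dickson 1 (1 : R) 2 = X ^ 2 - C 2 := by
      rw [show (2 : ℕ) = 0 + 2 from rfl, dickson_add_two, dickson_one, dickson_zero, map_ofNat, C_1]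
      ring
    rw [h2]
    exact ⟨monic_X_pow_sub_C 2 (by norm_num), natDegree_X_pow_sub_C⟩
  | n + 2 => by
    obtain ⟨h1m, h1d⟩ := dickson_monic_natDegree R (n + 1)
    obtain ⟨h0m, h0d⟩ := dickson_monic_natDegree R n
    rw [show n + 2 + 1 = (n + 1) + 2 from rfl, dickson_add_two]
    have hXm : (X * dickson 1 (1 : R) (n + 2)).Monic := monic_X.mul h1m
    have hXd : (X * dickson 1 (1 : R) (n + 2)).natDegree = n + 3 := by
      rw [monic_X.natDegree_mul h1m, natDegree_X, h1d]
      omega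
    have hlt : (C (1 : R) * dickson 1 (1 : R) (n + 1)).natDegree <
        (X * dickson 1 (1 : R) (n + 2)).natDegree := by
      rw [hXd, C_1, one_mul, h0d]; omega
    constructor
    · apply hXm.sub_of_left
      exact degree_lt_degree hlt
    · rw [natDegree_sub_eq_left_of_natDegree_lt hlt, hXd]

/-- over an algebraically closed field `k` with `char k ∤ 2d`
(and `d ≥ 1`), for every `β ∈ k` the polynomial `φ_d(X) - β` has at least `d/2`
distinct roots in `k`: twice the number of its distinct roots is at least `d`. -/
theorem stmt19 (k : Type*) [Field k] [IsAlgClosed k] (d : ℕ) (hd : 1 ≤ d)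
    (hchar : ¬ (ringChar k ∣ 2 * d)) (β : k) :
    d ≤ 2 * Set.ncard {x : k | Polynomial.aeval x (dickson 1 (1 : k) d) = β} := by
  -- characteristic facts
  classical
  have hcast : ((2 * d : ℕ) : k) ≠ 0 := fun h => hchar ((ringChar.spec (R := k) (2 * d)).mp h)
  have hdk : ((d : ℕ) : k) ≠ 0 := fun h => hcast (by push_cast; rw [h, mul_zero])
  -- find z with z + z⁻¹ = β
  obtain ⟨z, hz⟩ : ∃ z : k, z ^ 2 - β * z + 1 = 0 := by
    obtain ⟨z, hz⟩ := IsAlgClosed.exists_root (X ^ 2 - C β * X + 1 : k[X]) (by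
      have : (X ^ 2 - C β * X + 1 : k[X]).natDegree = 2 := by
        have : (X ^ 2 - C β * X + 1 : k[X]) = X ^ 2 + C (-β) * X + C 1 := by
          simp; ring
        rw [this]
        compute_degree!
      intro h
      have hle : (X ^ 2 - C β * X + 1 : k[X]).natDegree = 0 :=
        natDegree_eq_zero_iff_degree_le_zero.mpr h.le
      omega)
    exact ⟨z, by simpa [IsRoot] using hz⟩
  have hz0 : z ≠ 0 := by
    intro h; rw [h] at hz; simp at hz
  have hzβ : z + z⁻¹ = β := by
    field_simp
    linear_combination hz
  -- the set T of d-th roots of z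
  set T : Finset k := (X ^ d - C z : k[X]).roots.toFinset with hT
  have hsep : (X ^ d - C z : k[X]).Separable := separable_X_pow_sub_C z hdk hz0
  have hTcard : T.card = d := by
    rw [hT, Multiset.toFinset_card_of_nodup (nodup_roots hsep)]
    have hsplit : (X ^ d - C z : k[X]).Splits :=
      IsAlgClosed.splits _
    rw [splits_iff_card_roots] at hsplit
    rw [hsplit, natDegree_X_pow_sub_C]
  have hmemT : ∀ t ∈ T, t ^ d = z := by
    intro t ht
    rw [hT, Multiset.mem_toFinset, mem_roots] at ht
    · have h2 : t ^ d - z = 0 := by simpa using ht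
      exact sub_eq_zero.mp h2
    · intro h
      have : (X ^ d - C z : k[X]).natDegree = d := natDegree_X_pow_sub_C
      rw [h] at this; simp at this; omega
  have hT0 : ∀ t ∈ T, t ≠ 0 := by
    intro t ht h
    apply hz0
    rw [← hmemT t ht, h, zero_pow (by omega)]
  -- the map t ↦ t + t⁻¹
  set f : k → k := fun t => t + t⁻¹ with hf
  -- image is in the target set
  have himg : ↑(T.image f) ⊆ {x : k | Polynomial.aeval x (dickson 1 (1 : k) d) = β} := by
    intro x hx
    simp only [Finset.coe_image, Set.mem_image, Finset.mem_coe] at hx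
    obtain ⟨t, ht, rfl⟩ := hx
    have ht0 := hT0 t ht
    show Polynomial.aeval (f t) (dickson 1 (1 : k) d) = β
    have : Polynomial.aeval (f t) (dickson 1 (1 : k) d) =
        (dickson 1 (1 : k) d).eval (t + t⁻¹) := by
      simp [hf, aeval_def, eval₂_eq_eval_map, Algebra.algebraMap_self, Polynomial.map_id]
    rw [this, dickson_one_one_eval_add_inv t t⁻¹ (mul_inv_cancel₀ ht0),
      hmemT t ht, inv_pow, hmemT t ht, hzβ]
  -- fibers of f have at most 2 elements
  have hfiber : ∀ b ∈ T.image f, (T.filter (fun t => f t = b)).card ≤ 2 := by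
    intro b _
    have hsub : T.filter (fun t => f t = b) ⊆ (X ^ 2 - C b * X + 1 : k[X]).roots.toFinset := by
      intro t ht
      rw [Finset.mem_filter] at ht
      obtain ⟨htT, hft⟩ := ht
      have ht0 := hT0 t htT
      rw [Multiset.mem_toFinset, mem_roots]
      · simp only [IsRoot, eval_add, eval_sub, eval_pow, eval_mul, eval_C, eval_X, eval_one]
        have hb : b = t + t⁻¹ := hft.symm
        rw [hb]
        field_simp
        ring
      · intro h
        have h2 : (X ^ 2 - C b * X + 1 : k[X]).coeff 2 = 0 := by rw [h]; simp
        simp [coeff_X_pow, coeff_one] at h2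
    calc (T.filter (fun t => f t = b)).card
        ≤ (X ^ 2 - C b * X + 1 : k[X]).roots.toFinset.card := Finset.card_le_card hsub
      _ ≤ Multiset.card (X ^ 2 - C b * X + 1 : k[X]).roots := Multiset.toFinset_card_le _
      _ ≤ (X ^ 2 - C b * X + 1 : k[X]).natDegree := card_roots' _
      _ ≤ 2 := by
          have : (X ^ 2 - C b * X + 1 : k[X]) = X ^ 2 + C (-b) * X + C 1 := by simp; ring
          rw [this]; compute_degree
  -- put it together
  have hmain : d ≤ 2 * (T.image f).card := by
    rw [← hTcard]
    exact Finset.card_le_mul_card_image T 2 hfiber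
  -- target set is finite
  have hfin : {x : k | Polynomial.aeval x (dickson 1 (1 : k) d) = β}.Finite := by
    obtain ⟨n, rfl⟩ : ∃ n, d = n + 1 := ⟨d - 1, by omega⟩
    obtain ⟨hm, hdeg⟩ := dickson_monic_natDegree k n
    have hne : dickson 1 (1 : k) (n + 1) - C β ≠ 0 := by
      intro h
      have := congrArg natDegree (sub_eq_zero.mp h)
      rw [hdeg, natDegree_C] at this
      omega
    have := finite_setOf_isRoot hne
    apply this.subset
    intro x hx
    simp only [Set.mem_setOf_eq] at hx ⊢
    simp only [IsRoot, eval_sub, eval_C, sub_eq_zero]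
    rw [← hx]
    simp [aeval_def, eval₂_eq_eval_map, Algebra.algebraMap_self, Polynomial.map_id]
  calc d ≤ 2 * (T.image f).card := hmain
    _ = 2 * Set.ncard (↑(T.image f) : Set k) := by rw [Set.ncard_coe_finset]
    _ ≤ 2 * Set.ncard {x : k | Polynomial.aeval x (dickson 1 (1 : k) d) = β} := by
        exact Nat.mul_le_mul_left 2 (Set.ncard_le_ncard himg hfin)
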